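/- For s ≥ 1, the following formal power series identity holds: ((1 - z^s)/(1 - z)) · ( z + z ∑_{n ≥ 1} ∏_{k=1}^n z^(s-1)(z + z^(2^k)) ) = (1/(1-z)) · ( z + z ∑_{n ≥ 1} z^((s-1)n) z^(2^n) ∏_{k=1}^{n-1} (z + z^(2^k)) ). -/

import Mathlib

open PowerSeries Finset

private lemma prod_pull (t n : ℕ) :
    ∏ k ∈ Icc 1 n, (X : PowerSeries ℚ) ^ t * (X + X ^ (2 ^ k))
      = X ^ (t * n) * ∏ k ∈ Icc 1 n, ((X : PowerSeries ℚ) + X ^ (2 ^ k)) := by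
  rw [Finset.prod_mul_distrib, Finset.prod_const, Nat.card_Icc, ← pow_mul]
  simp [mul_comm]

private lemma key (t N : ℕ) :
    (1 - (X : PowerSeries ℚ) ^ (t + 1)) *
      (X + X * ∑ n ∈ Icc 1 N, ∏ k ∈ Icc 1 n, X ^ t * (X + X ^ (2 ^ k)))
      + X ^ (t + 2) * ∏ k ∈ Icc 1 N, (X : PowerSeries ℚ) ^ t * (X + X ^ (2 ^ k))
    = X + X * ∑ n ∈ Icc 1 N,
        X ^ (t * n) * X ^ (2 ^ n) *
          ∏ k ∈ Icc 1 (n - 1), ((X : PowerSeries ℚ) + X ^ (2 ^ k)) := by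
  induction N with
  | zero => simp; ring
  | succ N ih =>
    rw [Finset.sum_Icc_succ_top (by omega), Finset.sum_Icc_succ_top (by omega)]
    have hP : ∏ k ∈ Icc 1 (N + 1), (X : PowerSeries ℚ) ^ t * (X + X ^ (2 ^ k))
        = X ^ (t + 1) * ∏ k ∈ Icc 1 N, (X : PowerSeries ℚ) ^ t * (X + X ^ (2 ^ k))
          + X ^ (t * (N + 1)) * X ^ (2 ^ (N + 1)) *
              ∏ k ∈ Icc 1 N, ((X : PowerSeries ℚ) + X ^ (2 ^ k)) := by
      rw [Finset.prod_Icc_succ_top (by omega), prod_pull]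
      ring
    rw [Nat.add_sub_cancel]
    linear_combination ih + (X : PowerSeries ℚ) * hP

theorem meta_fibonacci_gf_identity (s : ℕ) (hs : 1 ≤ s) (N : ℕ) :
    PowerSeries.coeff (R := ℚ) N
        ((1 - (X : PowerSeries ℚ) ^ s) * (1 - X)⁻¹ *
          (X + X * ∑ n ∈ Finset.Icc 1 N,
            ∏ k ∈ Finset.Icc 1 n, X ^ (s - 1) * (X + X ^ (2 ^ k))))
      = PowerSeries.coeff (R := ℚ) N
        ((1 - (X : PowerSeries ℚ))⁻¹ *
          (X + X * ∑ n ∈ Finset.Icc 1 N,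
            X ^ ((s - 1) * n) * X ^ (2 ^ n) *
              ∏ k ∈ Finset.Icc 1 (n - 1), (X + X ^ (2 ^ k)))) := by
  obtain ⟨t, rfl⟩ := Nat.exists_eq_add_of_le' hs
  simp only [Nat.add_sub_cancel]
  have h := key t N
  have hrw : (1 - (X : PowerSeries ℚ) ^ (t + 1)) * (1 - X)⁻¹ *
        (X + X * ∑ n ∈ Icc 1 N, ∏ k ∈ Icc 1 n, X ^ t * (X + X ^ (2 ^ k)))
      = (1 - (X : PowerSeries ℚ))⁻¹ *
          (X + X * ∑ n ∈ Icc 1 N,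
            X ^ (t * n) * X ^ (2 ^ n) *
              ∏ k ∈ Icc 1 (n - 1), ((X : PowerSeries ℚ) + X ^ (2 ^ k)))
        - (1 - X)⁻¹ *
            (X ^ (t + 2) * ∏ k ∈ Icc 1 N, (X : PowerSeries ℚ) ^ t * (X + X ^ (2 ^ k))) := by
    rw [← h]; ring
  rw [hrw, map_sub]
  have hzero : PowerSeries.coeff (R := ℚ) N
      ((1 - (X : PowerSeries ℚ))⁻¹ *
        (X ^ (t + 2) * ∏ k ∈ Icc 1 N, (X : PowerSeries ℚ) ^ t * (X + X ^ (2 ^ k)))) = 0 := by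
    have hd : (X : PowerSeries ℚ) ^ (N + 1) ∣
        (1 - X)⁻¹ * (X ^ (t + 2) * ∏ k ∈ Icc 1 N, (X : PowerSeries ℚ) ^ t * (X + X ^ (2 ^ k))) := by
      have h1 : (X : PowerSeries ℚ) ^ N ∣
          ∏ k ∈ Icc 1 N, (X : PowerSeries ℚ) ^ t * (X + X ^ (2 ^ k)) := by
        have : (X : PowerSeries ℚ) ^ N = ∏ k ∈ Icc 1 N, (X : PowerSeries ℚ) := by
          rw [Finset.prod_const, Nat.card_Icc]; simp
        rw [this]
        refine Finset.prod_dvd_prod_of_dvd _ _ (fun k _ => ?_)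
        exact Dvd.dvd.mul_left (dvd_add dvd_rfl (dvd_pow_self X (by positivity))) _
      have h2 : (X : PowerSeries ℚ) ^ (N + 1) ∣
          X ^ (t + 2) * ∏ k ∈ Icc 1 N, (X : PowerSeries ℚ) ^ t * (X + X ^ (2 ^ k)) := by
        have : (X : PowerSeries ℚ) ^ (N + 1) = X ^ 1 * X ^ N := by rw [← pow_add]; ring_nf
        rw [this]
        exact mul_dvd_mul (pow_dvd_pow X (by omega)) h1
      exact Dvd.dvd.mul_left h2 _
    exact PowerSeries.X_pow_dvd_iff.mp hd N (Nat.lt_succ_self N)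
  rw [hzero, sub_zero]
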